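/- Let c² > 2 and let A be the n×n matrix with a_{i,j} = c^{−|i−j|}. Then per(A) ≤ (1 + 1/(c²−2))ⁿ. In particular, if c = c_n = Ω(√n), then per(A_n) stays bounded (≤ e) as n → ∞. -/

import Mathlib

open Matrix BigOperators

/-- The permanent of a square matrix. -/
noncomputable def per {α : Type*} [DecidableEq α] [Fintype α] (A : Matrix α α ℝ) : ℝ :=
  ∑ σ : Equiv.Perm α, ∏ i, A i (σ i)

open Finset Equiv

lemma per_expand {m : ℕ} (A : Matrix (Fin (m+1)) (Fin (m+1)) ℝ) :
    per A = ∑ σ : Equiv.Perm (Fin m),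
      (A 0 0 * ∏ i, A i.succ (σ i).succ
        + ∑ i₀ : Fin m, A 0 (σ i₀).succ * A i₀.succ 0 *
            ∏ i ∈ Finset.univ.erase i₀, A i.succ (σ i).succ) := by
  rw [per, ← Equiv.sum_comp (Equiv.Perm.decomposeFin.symm)
    (fun τ => ∏ i, A i (τ i)), Fintype.sum_prod_type, Finset.sum_comm]
  refine Finset.sum_congr rfl fun σ _ => ?_
  rw [Fin.sum_univ_succ]
  congr 1
  · simp [Fin.prod_univ_succ]
  · rw [← Equiv.sum_comp σ
      (fun j => ∏ i, A i ((Equiv.Perm.decomposeFin.symm (Fin.succ j, σ)) i))]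
    refine Finset.sum_congr rfl fun i₀ _ => ?_
    rw [Fin.prod_univ_succ]
    simp only [Equiv.Perm.decomposeFin_symm_apply_zero,
      Equiv.Perm.decomposeFin_symm_apply_succ]
    rw [← Finset.mul_prod_erase Finset.univ _ (Finset.mem_univ i₀),
      Equiv.swap_apply_right, mul_assoc]
    have : ∀ i ∈ Finset.univ.erase i₀,
        A i.succ (Equiv.swap 0 (σ i₀).succ (σ i).succ) = A i.succ (σ i).succ := by
      intro i hi
      rw [Equiv.swap_apply_of_ne_of_ne (Fin.succ_ne_zero _)]
      exact fun h => (Finset.mem_erase.mp hi).1 (σ.injective (Fin.succ_injective _ h))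
    rw [Finset.prod_congr rfl this]

lemma per_step {m : ℕ} (A : Matrix (Fin (m+1)) (Fin (m+1)) ℝ)
    (hA : ∀ i j, 0 ≤ A i j) (h0 : 0 < A 0 0) :
    per A ≤ A 0 0 *
      per (Matrix.of fun i j : Fin m =>
        A i.succ j.succ + A i.succ 0 * A 0 j.succ / A 0 0) := by
  rw [per_expand, per, Finset.mul_sum]
  refine Finset.sum_le_sum fun σ _ => ?_
  set f : Fin m → ℝ := fun i => A i.succ (σ i).succ with hf
  set g : Fin m → ℝ := fun i => A i.succ 0 * A 0 (σ i).succ / A 0 0 with hg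
  have hprod : ∏ i, (Matrix.of fun i j : Fin m =>
      A i.succ j.succ + A i.succ 0 * A 0 j.succ / A 0 0) i (σ i)
      = ∑ t ∈ (Finset.univ : Finset (Fin m)).powerset,
        (∏ i ∈ t, g i) * ∏ i ∈ Finset.univ \ t, f i := by
    have he : ∀ i ∈ (Finset.univ : Finset (Fin m)), (Matrix.of fun i j : Fin m =>
        A i.succ j.succ + A i.succ 0 * A 0 j.succ / A 0 0) i (σ i) = g i + f i := by
      intro i _
      simp only [Matrix.of_apply, hf, hg]
      ring
    rw [Finset.prod_congr rfl he, Finset.prod_add]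
  rw [hprod, Finset.mul_sum]
  have hsub : insert (∅ : Finset (Fin m)) (Finset.univ.image fun i => {i})
      ⊆ (Finset.univ : Finset (Fin m)).powerset := fun t _ =>
    Finset.mem_powerset.mpr (Finset.subset_univ t)
  have hkey : ∑ t ∈ insert (∅ : Finset (Fin m)) (Finset.univ.image fun i => {i}),
        A 0 0 * ((∏ i ∈ t, g i) * ∏ i ∈ Finset.univ \ t, f i)
      ≤ ∑ t ∈ (Finset.univ : Finset (Fin m)).powerset,
        A 0 0 * ((∏ i ∈ t, g i) * ∏ i ∈ Finset.univ \ t, f i) := by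
    refine Finset.sum_le_sum_of_subset_of_nonneg hsub fun t _ _ => ?_
    have hgpos : ∀ i ∈ t, 0 ≤ g i := fun i _ =>
      div_nonneg (mul_nonneg (hA _ _) (hA _ _)) h0.le
    have hfpos : ∀ i ∈ Finset.univ \ t, 0 ≤ f i := fun i _ => hA _ _
    exact mul_nonneg h0.le (mul_nonneg (Finset.prod_nonneg hgpos) (Finset.prod_nonneg hfpos))
  refine le_trans (le_of_eq ?_) hkey
  rw [Finset.sum_insert (by simp), Finset.sum_image (by intro a _ b _ h; exact Finset.singleton_inj.mp h)]
  congr 1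
  · simp [mul_comm]
  · refine Finset.sum_congr rfl fun i₀ _ => ?_
    rw [Finset.prod_singleton, hg]
    have : A 0 0 * (A i₀.succ 0 * A 0 (σ i₀).succ / A 0 0) =
        A 0 (σ i₀).succ * A i₀.succ 0 := by
      field_simp
    rw [Finset.sdiff_singleton_eq_erase, ← mul_assoc, this]

noncomputable def Mx (x b : ℝ) (m : ℕ) : Matrix (Fin m) (Fin m) ℝ :=
  Matrix.of fun i j =>
    x ^ (((i : ℕ) : ℤ) - ((j : ℕ) : ℤ)).natAbs + b * x ^ ((i : ℕ) + (j : ℕ))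

lemma per_nonneg {α : Type*} [DecidableEq α] [Fintype α] {A : Matrix α α ℝ}
    (h : ∀ i j, 0 ≤ A i j) : 0 ≤ per A :=
  Finset.sum_nonneg fun _ _ => Finset.prod_nonneg fun i _ => h _ _

lemma Mx_nonneg {x b : ℝ} (hx : 0 ≤ x) (hb : 0 ≤ b) {m : ℕ} :
    ∀ i j, 0 ≤ Mx x b m i j := fun i j =>
  add_nonneg (pow_nonneg hx _) (mul_nonneg hb (pow_nonneg hx _))

lemma per_fin_zero (A : Matrix (Fin 0) (Fin 0) ℝ) : per A = 1 := by
  simp [per]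

lemma per_Mx (x : ℝ) (hx : 0 < x) (h2 : 2 * x ^ 2 < 1) :
    ∀ m : ℕ, ∀ b : ℝ, 0 ≤ b → b ≤ x ^ 2 / (1 - 2 * x ^ 2) →
      per (Mx x b m) ≤ (1 + x ^ 2 / (1 - 2 * x ^ 2)) ^ m := by
  intro m
  induction m with
  | zero => intro b _ _; rw [per_fin_zero]; norm_num
  | succ m ih =>
    intro b hb hbβ
    set β := x ^ 2 / (1 - 2 * x ^ 2) with hβdef
    have hden : 0 < 1 - 2 * x ^ 2 := by linarith
    have hβ0 : 0 ≤ β := div_nonneg (by positivity) hden.le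
    have hβfix : β = (1 + 2 * β) * x ^ 2 := by
      have hm : β * (1 - 2 * x ^ 2) = x ^ 2 := by
        rw [hβdef, div_mul_cancel₀]; exact hden.ne'
      linear_combination hm
    have hdiag : (Mx x b (m+1)) 0 0 = 1 + b := by
      simp [Mx]
    have hnn : ∀ i j, 0 ≤ (Mx x b (m+1)) i j := by
      intro i j
      exact add_nonneg (by positivity) (mul_nonneg hb (by positivity))
    have h00 : 0 < (Mx x b (m+1)) 0 0 := by rw [hdiag]; linarith
    have hstep := per_step (Mx x b (m+1)) hnn h00
    have hB : (Matrix.of fun i j : Fin m =>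
        (Mx x b (m+1)) i.succ j.succ +
          (Mx x b (m+1)) i.succ 0 * (Mx x b (m+1)) 0 j.succ / (Mx x b (m+1)) 0 0)
        = Mx x ((1 + 2 * b) * x ^ 2) m := by
      ext i j
      have hb1 : (1 : ℝ) + b ≠ 0 := by linarith
      simp only [Matrix.of_apply, Mx, hdiag, Fin.val_succ, Fin.val_zero,
        Nat.cast_add, Nat.cast_one, Nat.cast_zero]
      have h1 : ((((i : ℕ) : ℤ) + 1) - (((j : ℕ) : ℤ) + 1)).natAbs
          = (((i : ℕ) : ℤ) - ((j : ℕ) : ℤ)).natAbs := by omega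
      have h2a : ((((i : ℕ) : ℤ) + 1) - 0).natAbs = (i : ℕ) + 1 := by omega
      have h2b : ((0 : ℤ) - (((j : ℕ) : ℤ) + 1)).natAbs = (j : ℕ) + 1 := by omega
      rw [h1, h2a, h2b]
      rw [pow_zero]
      field_simp
      ring
    rw [hB] at hstep
    have hb'0 : 0 ≤ (1 + 2 * b) * x ^ 2 := by positivity
    have hb'β : (1 + 2 * b) * x ^ 2 ≤ β := by
      rw [hβfix]
      have : (1 : ℝ) + 2 * b ≤ 1 + 2 * β := by linarith
      nlinarith [sq_nonneg x]
    calc per (Mx x b (m+1)) ≤ (Mx x b (m+1)) 0 0 * per (Mx x ((1 + 2 * b) * x ^ 2) m) :=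
          hstep
      _ ≤ (1 + β) * (1 + β) ^ m := by
          rw [hdiag]
          exact mul_le_mul (by linarith) (ih _ hb'0 hb'β)
            (per_nonneg (Mx_nonneg hx.le hb'0)) (by linarith)
      _ = (1 + β) ^ (m + 1) := (pow_succ' _ _).symm

theorem stmt16 {n : ℕ} (c : ℝ) (hc : 1 < c) (hc2 : 2 < c ^ 2)
    (A : Matrix (Fin n) (Fin n) ℝ)
    (hA : ∀ i j : Fin n, A i j = c ^ (-|((i : ℕ) : ℤ) - ((j : ℕ) : ℤ)|)) :
    per A ≤ (1 + 1 / (c ^ 2 - 2)) ^ n := by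
  have hc0 : 0 < c := by linarith
  have hx : 0 < c⁻¹ := inv_pos.mpr hc0
  have h2 : 2 * (c⁻¹) ^ 2 < 1 := by
    rw [inv_pow]
    rw [mul_inv_lt_iff₀ (by positivity)]
    linarith
  have hAM : A = Mx c⁻¹ 0 n := by
    ext i j
    rw [hA, Mx]
    simp only [Matrix.of_apply, zero_mul, add_zero]
    rw [Int.abs_eq_natAbs, _root_.zpow_neg, zpow_natCast, inv_pow]
  have hβ : (c⁻¹) ^ 2 / (1 - 2 * (c⁻¹) ^ 2) = 1 / (c ^ 2 - 2) := by
    rw [inv_pow]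
    field_simp
  have := per_Mx c⁻¹ hx h2 n 0 le_rfl (by rw [hβ]; exact le_of_lt (div_pos one_pos (by linarith)))
  rw [hAM]
  rw [hβ] at this
  exact this
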